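/- Every loopless multigraph on n ≥ 4 vertices in which every set of four vertices spans at most 20 edges (counted with multiplicity) has at most 3·C(n,2) + n − 2 edges. -/
import Mathlib

private lemma two_mul_choose_two (n : ℕ) : 2 * n.choose 2 = n * (n - 1) := by
  induction n with
  | zero => simp
  | succ m ih =>
    rw [Nat.choose_succ_succ' m 1, Nat.mul_add, ih, Nat.choose_one_right]
    cases m
    · simp
    · simp; ring

private lemma count_key {V : Type*} [DecidableEq V] (mult : Sym2 V → ℕ)
    (hloop : ∀ v, mult (Sym2.diag v) = 0) (S : Finset V) :
    ∑ v ∈ S, ∑ p ∈ (S.erase v).sym2, mult p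
      = (S.card - 2) * ∑ p ∈ S.sym2, mult p := by
  have h1 : ∀ v ∈ S, ∑ p ∈ (S.erase v).sym2, mult p
      = ∑ p ∈ S.sym2, if p ∈ (S.erase v).sym2 then mult p else 0 := by
    intro v _
    rw [Finset.sum_ite_mem,
      Finset.inter_eq_right.mpr (Finset.sym2_mono (S.erase_subset v))]
  rw [Finset.sum_congr rfl h1, Finset.sum_comm, Finset.mul_sum]
  refine Finset.sum_congr rfl ?_
  intro p hp
  induction p with
  | _ x y =>
    rw [Finset.mk_mem_sym2_iff] at hp
    obtain ⟨hx, hy⟩ := hp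
    by_cases hxy : x = y
    · subst hxy
      have h0 : mult s(x, x) = 0 := hloop x
      simp [h0]
    · have : ∀ v ∈ S, (if s(x, y) ∈ (S.erase v).sym2 then mult s(x, y) else 0)
          = if v ∈ ({x, y} : Finset V) then 0 else mult s(x, y) := by
        intro v _
        simp only [Finset.mk_mem_sym2_iff]
        by_cases hvx : v = x
        · simp [hvx, Finset.mem_erase]
        · by_cases hvy : v = y
          · simp [hvy, Finset.mem_erase]
          · simp [Finset.mem_erase, Ne.symm hvx, Ne.symm hvy, hvx, hvy, hx, hy]
      rw [Finset.sum_congr rfl this, Finset.sum_ite, Finset.sum_const,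
        Finset.sum_const, smul_eq_mul, mul_zero, zero_add, smul_eq_mul]
      congr 1
      rw [Finset.filter_not]
      rw [Finset.card_sdiff_of_subset (Finset.filter_subset _ _)]
      congr 1
      rw [Finset.filter_mem_eq_inter, Finset.inter_eq_right.mpr]
      · simp [hxy]
      · intro a ha
        simp only [Finset.mem_insert, Finset.mem_singleton] at ha
        rcases ha with h | h <;> subst h <;> assumption

private lemma aux_bound {V : Type*} [DecidableEq V] (mult : Sym2 V → ℕ)
    (hloop : ∀ v, mult (Sym2.diag v) = 0)
    (hspan : ∀ S : Finset V, S.card = 4 → ∑ p ∈ S.sym2, mult p ≤ 20) :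
    ∀ n : ℕ, 4 ≤ n → ∀ S : Finset V, S.card = n →
      ∑ p ∈ S.sym2, mult p ≤ 3 * n.choose 2 + n - 2 := by
  intro n hn4
  induction n, hn4 using Nat.le_induction with
  | base =>
    intro S hS
    have h20 := hspan S hS
    have h6 : Nat.choose 4 2 = 6 := by decide
    omega
  | succ n hn ih =>
    intro S hS
    -- key identity
    have key := count_key mult hloop S
    rw [hS] at key
    have hsub : ∀ v ∈ S, ∑ p ∈ (S.erase v).sym2, mult p ≤ 3 * n.choose 2 + n - 2 := by
      intro v hv
      exact ih (S.erase v) (by rw [Finset.card_erase_of_mem hv, hS]; omega)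
    have hsum : ∑ v ∈ S, ∑ p ∈ (S.erase v).sym2, mult p
        ≤ (n + 1) * (3 * n.choose 2 + n - 2) := by
      calc ∑ v ∈ S, ∑ p ∈ (S.erase v).sym2, mult p
          ≤ ∑ _v ∈ S, (3 * n.choose 2 + n - 2) := Finset.sum_le_sum hsub
        _ = (n + 1) * (3 * n.choose 2 + n - 2) := by
            rw [Finset.sum_const, hS, smul_eq_mul]
    rw [key] at hsum
    set M := ∑ p ∈ S.sym2, mult p with hM
    set c := n.choose 2 with hcdef
    set c' := (n + 1).choose 2 with hc'def
    have hc : 2 * c = n * (n - 1) := two_mul_choose_two n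
    have hc2 : 2 * c' = (n + 1) * n := by
      have := two_mul_choose_two (n + 1); simpa using this
    -- goal : M ≤ 3 * c' + (n + 1) - 2
    by_contra hcon
    push_neg at hcon
    have hcZ : 2 * (c : ℤ) = n * ((n : ℤ) - 1) := by
      have h1 : (1:ℕ) ≤ n := by omega
      zify [h1] at hc; linarith
    have hc2Z : 2 * (c' : ℤ) = ((n : ℤ) + 1) * n := by exact_mod_cast hc2
    have hsumZ : ((n : ℤ) + 1 - 2) * M ≤ ((n : ℤ) + 1) * (3 * c + n - 2) := by
      have ha : (2:ℕ) ≤ n + 1 := by omega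
      have hb : (2:ℕ) ≤ 3 * c + n := by omega
      zify [ha, hb] at hsum; linarith
    have hconZ : 3 * (c' : ℤ) + (n : ℤ) + 1 - 2 < M := by
      have ha : (2:ℕ) ≤ 3 * c' + (n + 1) := by omega
      zify [ha] at hcon; linarith
    have h1 : ((n : ℤ) - 1) * (3 * c' + n) ≤ ((n : ℤ) - 1) * M := by
      apply mul_le_mul_of_nonneg_left
      · linarith
      · have : (4:ℤ) ≤ n := by exact_mod_cast hn
        linarith
    have h2 : ((n : ℤ) - 1) * (3 * c' + n) ≤ ((n : ℤ) + 1) * (3 * c + n - 2) := by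
      refine le_trans h1 ?_
      have : ((n : ℤ) + 1 - 2) = (n : ℤ) - 1 := by ring
      linarith [hsumZ]
    have e1 : 6 * ((n : ℤ) - 1) * c' = 3 * ((n : ℤ) - 1) * ((n : ℤ) + 1) * n := by
      linear_combination 3 * ((n : ℤ) - 1) * hc2Z
    have e2 : 6 * ((n : ℤ) + 1) * c = 3 * ((n : ℤ) + 1) * n * ((n : ℤ) - 1) := by
      linear_combination 3 * ((n : ℤ) + 1) * hcZ
    nlinarith [h2, e1, e2]

theorem stmt_10 {V : Type*} [Fintype V] [DecidableEq V] (mult : Sym2 V → ℕ)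
    (hloop : ∀ v, mult (Sym2.diag v) = 0) (n : ℕ) (hn : Fintype.card V = n)
    (h4 : 4 ≤ n)
    (hspan : ∀ S : Finset V, S.card = 4 → ∑ p ∈ S.sym2, mult p ≤ 20) :
    ∑ p : Sym2 V, mult p ≤ 3 * n.choose 2 + n - 2 := by
  have := aux_bound mult hloop hspan n h4 Finset.univ (by simpa using hn)
  rwa [Finset.sym2_univ] at this
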